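/- arXiv:0801.2322 — 2 statements merged into one kernel-verified Lean document; each statement's English description precedes it below -/
import Mathlib

section
/- If X/Γ is a simply laced quotient and the quotient graph X/Γ is connected, then all vertex orbits of Γ acting on X have the same cardinality. -/
attribute [local instance] Classical.propDecidable


/-- The quotient of a graph `X` by the action of a group `Γ`: vertices are the
orbits, with distinct orbits adjacent iff they contain adjacent representatives. -/
def quotGraph {V : Type*} (X : SimpleGraph V) (Γ : Type*) [Group Γ] [MulAction Γ V] :
    SimpleGraph (Quotient (MulAction.orbitRel Γ V)) where
  Adj U W := U ≠ W ∧ ∃ u w : V, Quotient.mk (MulAction.orbitRel Γ V) u = U ∧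
      Quotient.mk (MulAction.orbitRel Γ V) w = W ∧ X.Adj u w
  symm := by
    refine ⟨?_⟩
    rintro U W ⟨hne, u, w, hu, hw, h⟩
    exact ⟨hne.symm, w, u, hw, hu, h.symm⟩
  loopless := by
    refine ⟨?_⟩
    rintro U ⟨hne, -⟩
    exact hne rfl

/-- The quotient `X/Γ` is simply laced: no edge of `X` joins two vertices of a single
orbit, and no vertex of `X` has two distinct neighbors in the same orbit. -/
def SimplyLaced {V : Type*} (X : SimpleGraph V) (Γ : Type*) [Group Γ] [MulAction Γ V] : Prop :=
  (∀ u v : V, X.Adj u v →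
      Quotient.mk (MulAction.orbitRel Γ V) u ≠ Quotient.mk (MulAction.orbitRel Γ V) v) ∧
  (∀ u v w : V, X.Adj u v → X.Adj u w →
      Quotient.mk (MulAction.orbitRel Γ V) v = Quotient.mk (MulAction.orbitRel Γ V) w → v = w)

lemma card_le_of_adj {V : Type*} [Fintype V] [DecidableEq V]
    (X : SimpleGraph V) (Γ : Type*) [Group Γ] [MulAction Γ V]
    (hAut : ∀ (g : Γ) (u v : V), X.Adj u v ↔ X.Adj (g • u) (g • v))
    (hSL : SimplyLaced X Γ)
    {U W : Quotient (MulAction.orbitRel Γ V)} (h : (quotGraph X Γ).Adj U W) :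
    (Finset.univ.filter (fun v : V => Quotient.mk (MulAction.orbitRel Γ V) v = U)).card ≤
    (Finset.univ.filter (fun v : V => Quotient.mk (MulAction.orbitRel Γ V) v = W)).card := by
  obtain ⟨hne, u₀, w₀, hu₀, hw₀, hadj⟩ := h
  have hex : ∀ v : V, Quotient.mk (MulAction.orbitRel Γ V) v = U →
      ∃ w : V, Quotient.mk (MulAction.orbitRel Γ V) w = W ∧ X.Adj v w := by
    intro v hv
    have heq : Quotient.mk (MulAction.orbitRel Γ V) v =
        Quotient.mk (MulAction.orbitRel Γ V) u₀ := hv.trans hu₀.symm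
    obtain ⟨g, hg⟩ := Quotient.eq.mp heq
    refine ⟨g • w₀, ?_, ?_⟩
    · rw [← hw₀]
      exact Quotient.sound ⟨g, rfl⟩
    · rw [← hg]
      exact (hAut g u₀ w₀).mp hadj
  classical
  set f : V → V := fun v => if hv : Quotient.mk (MulAction.orbitRel Γ V) v = U
    then Classical.choose (hex v hv) else v with hf
  apply Finset.card_le_card_of_injOn f
  · intro v hv
    simp only [Finset.mem_coe, Finset.mem_filter, Finset.mem_univ, true_and] at hv ⊢
    simp only [hf, dif_pos hv]
    exact (Classical.choose_spec (hex v hv)).1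
  · intro v hv v' hv' hvv'
    simp only [Finset.coe_filter, Set.mem_setOf_eq, Finset.mem_univ, true_and] at hv hv'
    have h1 := (Classical.choose_spec (hex v hv)).2
    have h2 := (Classical.choose_spec (hex v' hv')).2
    simp only [hf, dif_pos hv, dif_pos hv'] at hvv'
    rw [hvv'] at h1
    exact hSL.2 _ v v' h1.symm h2.symm (hv.trans hv'.symm)

/-- If the quotient `X/Γ` is simply laced and connected, then all
vertex orbits have the same cardinality. -/
theorem quotGraph_orbits_card_eq_of_connected
    {V : Type*} [Fintype V] [DecidableEq V]
    (X : SimpleGraph V) (Γ : Type*) [Group Γ] [MulAction Γ V]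
    (hAut : ∀ (g : Γ) (u v : V), X.Adj u v ↔ X.Adj (g • u) (g • v))
    (hSL : SimplyLaced X Γ)
    (hconn : (quotGraph X Γ).Connected) :
    ∀ U W : Quotient (MulAction.orbitRel Γ V),
      (Finset.univ.filter
          (fun v : V => Quotient.mk (MulAction.orbitRel Γ V) v = U)).card =
      (Finset.univ.filter
          (fun v : V => Quotient.mk (MulAction.orbitRel Γ V) v = W)).card := by
  have hEq : ∀ {U W}, (quotGraph X Γ).Adj U W →
      (Finset.univ.filter
          (fun v : V => Quotient.mk (MulAction.orbitRel Γ V) v = U)).card =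
      (Finset.univ.filter
          (fun v : V => Quotient.mk (MulAction.orbitRel Γ V) v = W)).card :=
    fun h => le_antisymm (card_le_of_adj X Γ hAut hSL h) (card_le_of_adj X Γ hAut hSL h.symm)
  intro U W
  obtain ⟨p⟩ := hconn.preconnected U W
  induction p with
  | nil => rfl
  | cons h _ ih => exact (hEq h).trans ih
end

section
/- Let G and H be n-vertex graphs such that the 2k-dimensional Weisfeiler-Lehman algorithm does not distinguish G from H (their WL color multisets agree in every round). Then the k-th powers G^k and H^k are cospectral. -/
attribute [local instance] Classical.propDecidable

/-- The type of "types" (isomorphism types) of k-tuples: the pattern of equalities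
and of adjacencies among the entries. -/
def Tp (k : ℕ) : Type := (Fin k → Fin k → Prop) × (Fin k → Fin k → Prop)

/-- The type `tp` of a k-tuple of vertices: which entries are equal and which are
adjacent. Two tuples are equivalent iff they have the same `tp`. -/
def tp {V : Type*} (G : SimpleGraph V) {k : ℕ} (x : Fin k → V) : Tp k :=
  (fun a b => x a = x b, fun a b => G.Adj (x a) (x b))

/-- The type of colors used at round `r+1` of the k-dimensional Weisfeiler-Lehman
refinement (round indexing starts at `0` here, corresponding to round `1` of the
usual presentation). -/
def WLColor (k : ℕ) : ℕ → Type
  | 0 => Tp k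
  | r + 1 => Multiset (Tp (k + 1) × (Fin k → WLColor k r))

/-- The k-dimensional Weisfeiler-Lehman coloring of k-tuples: round `0` is the type
`tp`, and round `r+1` attaches to a tuple the multiset, over all vertices `m`, of the
type of the extended `(k+1)`-tuple together with the round-`r` colors of the tuples
obtained by substituting `m` into each of the `k` positions. -/
def WL {V : Type*} [Fintype V] (G : SimpleGraph V) (k : ℕ) :
    (r : ℕ) → (Fin k → V) → WLColor k r
  | 0, x => tp G x
  | r + 1, x =>
      Finset.univ.val.map fun m : V =>
        (tp G (Fin.snoc x m), fun t => WL G k r (Function.update x t m))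

/-- The k-th power of a graph: vertices are k-tuples, two tuples adjacent iff they
agree in all but one coordinate, at which the entries are adjacent in `G`. -/
def graphPow {V : Type*} (G : SimpleGraph V) (k : ℕ) : SimpleGraph (Fin k → V) where
  Adj x y := ∃ u, G.Adj (x u) (y u) ∧ ∀ l, l ≠ u → x l = y l
  symm := by
    constructor
    rintro x y ⟨u, h, he⟩
    exact ⟨u, h.symm, fun l hl => (he l hl).symm⟩
  loopless := by
    constructor
    rintro x ⟨u, h, -⟩
    exact G.loopless.irrefl _ h

/-- If the 2k-dimensional Weisfeiler-Lehman algorithm does not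
distinguish `G` from `H` (the multisets of colors of all 2k-tuples agree in every
round), then the k-th powers `G^k` and `H^k` are cospectral. -/
noncomputable def cnt (k : ℕ) : (m : ℕ) → WLColor (k + k) m → ℝ
  | 0, c => if (∀ i : Fin k, (show Tp (k+k) from c).1 (Fin.castAdd k i) (Fin.natAdd k i)) then 1 else 0
  | m+1, c => ((show Multiset (Tp (k+k+1) × (Fin (k+k) → WLColor (k+k) m)) from c).map
      (fun e => ∑ u : Fin k, if e.1.2 (Fin.castSucc (Fin.castAdd k u)) (Fin.last (k+k))
        then cnt k m (e.2 (Fin.castAdd k u)) else 0)).sum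

def dg (k : ℕ) : (m : ℕ) → WLColor (k + k) m → Prop
  | 0, c => ∀ i : Fin k, (show Tp (k+k) from c).1 (Fin.castAdd k i) (Fin.natAdd k i)
  | _+1, c => ∀ e ∈ (show Multiset (Tp (k+k+1) × (Fin (k+k) → WLColor (k+k) _)) from c),
      ∀ i : Fin k, e.1.1 (Fin.castSucc (Fin.castAdd k i)) (Fin.castSucc (Fin.natAdd k i))

example {V : Type*} [Fintype V] (G : SimpleGraph V) (n : ℕ) (r : ℕ) (x : Fin n → V) :
    WL G n (r+1) x = Finset.univ.val.map (fun m : V =>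
        (tp G (Fin.snoc x m), fun t => WL G n r (Function.update x t m))) := rfl

example {V : Type*} [Fintype V] (G : SimpleGraph V) (n : ℕ) (x : Fin n → V) :
    WL G n 0 x = tp G x := rfl

lemma update_append {V : Type*} {k : ℕ} (x y : Fin k → V) (u : Fin k) (v : V) :
    Function.update (Fin.append x y) (Fin.castAdd k u) v = Fin.append (Function.update x u v) y := by
  funext i
  refine Fin.addCases (fun j => ?_) (fun j => ?_) i
  · by_cases h : j = u
    · subst h; simp [Fin.append_left]
    · have hne : Fin.castAdd k j ≠ Fin.castAdd k u := by
        intro hh; exact h (Fin.ext (by simpa using congrArg Fin.val hh))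
      rw [Function.update_of_ne hne, Fin.append_left, Fin.append_left,
        Function.update_of_ne h]
  · have hne : Fin.natAdd k j ≠ Fin.castAdd k u := by
      intro hh
      have := congrArg Fin.val hh
      simp only [Fin.coe_natAdd, Fin.coe_castAdd] at this
      omega
    rw [Function.update_of_ne hne, Fin.append_right, Fin.append_right]

lemma append_halves {V : Type*} {k : ℕ} (z : Fin (k+k) → V) :
    Fin.append (fun i => z (Fin.castAdd k i)) (fun i => z (Fin.natAdd k i)) = z := by
  funext i
  refine Fin.addCases (fun j => ?_) (fun j => ?_) i
  · rw [Fin.append_left]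
  · rw [Fin.append_right]

lemma sum_adj_mul {V : Type*} [Fintype V] [DecidableEq V] (G : SimpleGraph V) (k : ℕ)
    (x : Fin k → V) (P : (Fin k → V) → ℝ) :
    ∑ w, ((graphPow G k).adjMatrix ℝ) x w * P w
      = ∑ u : Fin k, ∑ v : V, if G.Adj (x u) v then P (Function.update x u v) else 0 := by
  classical
  have hL : ∑ w, ((graphPow G k).adjMatrix ℝ) x w * P w
      = ∑ w ∈ Finset.univ.filter (fun w => (graphPow G k).Adj x w), P w := by
    rw [Finset.sum_filter]
    refine Finset.sum_congr rfl fun w _ => ?_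
    by_cases h : (graphPow G k).Adj x w <;> simp [h]
  have hR : (∑ u : Fin k, ∑ v : V, if G.Adj (x u) v then P (Function.update x u v) else 0)
      = ∑ p ∈ Finset.univ.filter (fun p : Fin k × V => G.Adj (x p.1) p.2),
          P (Function.update x p.1 p.2) := by
    rw [Finset.sum_filter]
    exact (Fintype.sum_prod_type (fun p : Fin k × V => if G.Adj (x p.1) p.2 then P (Function.update x p.1 p.2) else 0)).symm
  rw [hL, hR]
  refine (Finset.sum_bij (fun p _ => Function.update x p.1 p.2) ?_ ?_ ?_ ?_).symm
  · intro p hp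
    rw [Finset.mem_filter] at hp ⊢
    refine ⟨Finset.mem_univ _, p.1, ?_, fun l hl => (Function.update_of_ne hl _ _).symm⟩
    rw [Function.update_self]
    exact hp.2
  · intro p hp q hq hpq
    rw [Finset.mem_filter] at hp hq
    have h1 : p.2 ≠ x p.1 := fun h => (G.loopless.irrefl _ (h ▸ hp.2))
    have hep := congrFun hpq p.1
    by_cases h : p.1 = q.1
    · have hval : p.2 = q.2 := by
        have := congrFun hpq p.1
        rw [Function.update_self, h, Function.update_self] at this
        exact this
      exact Prod.ext h hval
    · exfalso
      rw [Function.update_self, Function.update_of_ne (fun hh => h hh)] at hep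
      exact h1 hep
  · intro w hw
    rw [Finset.mem_filter] at hw
    obtain ⟨u, hu, hl⟩ := hw.2
    refine ⟨(u, w u), Finset.mem_filter.2 ⟨Finset.mem_univ _, hu⟩, ?_⟩
    dsimp only
    funext l
    by_cases h : l = u
    · subst h; rw [Function.update_self]
    · rw [Function.update_of_ne h]; exact hl l h
  · intro p hp; rfl

lemma cnt_WL {V : Type*} [Fintype V] [DecidableEq V] (G : SimpleGraph V) (k : ℕ) :
    ∀ (m : ℕ) (x y : Fin k → V),
      cnt k m (WL G (k+k) m (Fin.append x y)) = (((graphPow G k).adjMatrix ℝ) ^ m) x y := by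
  intro m
  induction m with
  | zero =>
    intro x y
    rw [pow_zero, Matrix.one_apply]
    simp only [cnt]
    refine if_congr ?_ rfl rfl
    constructor
    · intro hi; funext i
      have h3 : Fin.append x y (Fin.castAdd k i) = Fin.append x y (Fin.natAdd k i) := hi i
      rwa [Fin.append_left, Fin.append_right] at h3
    · intro hxy i
      show Fin.append x y (Fin.castAdd k i) = Fin.append x y (Fin.natAdd k i)
      rw [Fin.append_left, Fin.append_right, hxy]
  | succ m ih =>
    intro x y
    have hstep : cnt k (m+1) (WL G (k+k) (m+1) (Fin.append x y))
        = ∑ v : V, ∑ u : Fin k,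
            if G.Adj (x u) v then
              cnt k m (WL G (k+k) m (Function.update (Fin.append x y) (Fin.castAdd k u) v))
            else 0 := by
      show ((Multiset.map _ (Finset.univ.val.map _)).sum : ℝ) = _
      rw [Multiset.map_map]
      rw [show ∀ (f : V → ℝ), (Finset.univ.val.map f).sum = ∑ v : V, f v from fun f => rfl]
      refine Finset.sum_congr rfl fun v _ => ?_
      refine Finset.sum_congr rfl fun u _ => ?_
      refine if_congr ?_ rfl rfl
      show G.Adj ((Fin.snoc (Fin.append x y) v : Fin (k+k+1) → V) ((Fin.castAdd k u).castSucc))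
          ((Fin.snoc (Fin.append x y) v : Fin (k+k+1) → V) (Fin.last (k+k))) ↔ G.Adj (x u) v
      rw [Fin.snoc_castSucc, Fin.snoc_last, Fin.append_left]
    rw [hstep]
    have hsum : ∀ v u, (if G.Adj (x u) v then
        cnt k m (WL G (k+k) m (Function.update (Fin.append x y) (Fin.castAdd k u) v)) else 0)
        = (if G.Adj (x u) v then (((graphPow G k).adjMatrix ℝ) ^ m) (Function.update x u v) y else 0) := by
      intro v u
      refine if_congr Iff.rfl ?_ rfl
      rw [update_append, ih]
    simp_rw [hsum]
    rw [Finset.sum_comm]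
    rw [pow_succ', Matrix.mul_apply]
    rw [sum_adj_mul G k x (fun w => (((graphPow G k).adjMatrix ℝ) ^ m) w y)]

lemma dg_WL {V : Type*} [Fintype V] [DecidableEq V] (G : SimpleGraph V) (k : ℕ) (m : ℕ)
    (z : Fin (k+k) → V) :
    dg k m (WL G (k+k) m z) ↔ ∀ i : Fin k, z (Fin.castAdd k i) = z (Fin.natAdd k i) := by
  cases m with
  | zero => exact Iff.rfl
  | succ m =>
    constructor
    · intro hd i
      have hv : ((tp G (Fin.snoc z (z (Fin.castAdd k i))),
          fun t => WL G (k+k) m (Function.update z t (z (Fin.castAdd k i)))) :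
            Tp (k+k+1) × (Fin (k+k) → WLColor (k+k) m)) ∈
          (show Multiset (Tp (k+k+1) × (Fin (k+k) → WLColor (k+k) m))
            from WL G (k+k) (m+1) z) :=
        Multiset.mem_map_of_mem _ (Finset.mem_univ_val _)
      have := hd _ hv i
      show z (Fin.castAdd k i) = z (Fin.natAdd k i)
      have h2 : (Fin.snoc z (z (Fin.castAdd k i)) : Fin (k+k+1) → V) ((Fin.castAdd k i).castSucc)
          = (Fin.snoc z (z (Fin.castAdd k i)) : Fin (k+k+1) → V) ((Fin.natAdd k i).castSucc) := this
      rwa [Fin.snoc_castSucc, Fin.snoc_castSucc] at h2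
    · intro hz e he i
      obtain ⟨v, _, rfl⟩ := Multiset.mem_map.mp he
      show (Fin.snoc z v : Fin (k+k+1) → V) ((Fin.castAdd k i).castSucc)
          = (Fin.snoc z v : Fin (k+k+1) → V) ((Fin.natAdd k i).castSucc)
      rw [Fin.snoc_castSucc, Fin.snoc_castSucc]
      exact hz i

noncomputable def gval (k m : ℕ) (c : WLColor (k+k) m) : ℝ :=
  if dg k m c then cnt k m c else 0

lemma trace_pow_eq_gval_sum {V : Type*} [Fintype V] [DecidableEq V]
    (G : SimpleGraph V) (k m : ℕ) :
    ((((graphPow G k).adjMatrix ℝ) ^ m)).trace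
      = (Finset.univ.val.map (fun z : Fin (k+k) → V => gval k m (WL G (k+k) m z))).sum := by
  classical
  have hsum : (Finset.univ.val.map (fun z : Fin (k+k) → V => gval k m (WL G (k+k) m z))).sum
      = ∑ z : Fin (k+k) → V, gval k m (WL G (k+k) m z) := rfl
  rw [hsum]
  have hz : ∀ z : Fin (k+k) → V, gval k m (WL G (k+k) m z)
      = if (fun i => z (Fin.castAdd k i)) = (fun i => z (Fin.natAdd k i))
        then (((graphPow G k).adjMatrix ℝ) ^ m) (fun i => z (Fin.castAdd k i)) (fun i => z (Fin.natAdd k i))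
        else 0 := by
    intro z
    unfold gval
    rw [← cnt_WL G k m (fun i => z (Fin.castAdd k i)) (fun i => z (Fin.natAdd k i))]
    rw [show Fin.append (fun i => z (Fin.castAdd k i)) (fun i => z (Fin.natAdd k i)) = z
      from append_halves z]
    refine if_congr ?_ rfl rfl
    rw [dg_WL, funext_iff]
  simp_rw [hz]
  -- reindex the sum by pairs
  let e : ((Fin k → V) × (Fin k → V)) ≃ (Fin (k+k) → V) :=
    { toFun := fun p => Fin.append p.1 p.2
      invFun := fun z => (fun i => z (Fin.castAdd k i), fun i => z (Fin.natAdd k i))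
      left_inv := by
        rintro ⟨x, y⟩
        refine Prod.ext ?_ ?_ <;> funext i
        · show Fin.append x y (Fin.castAdd k i) = x i
          rw [Fin.append_left]
        · show Fin.append x y (Fin.natAdd k i) = y i
          rw [Fin.append_right]
      right_inv := fun z => append_halves z }
  rw [← Equiv.sum_comp e]
  have hp : ∀ p : (Fin k → V) × (Fin k → V),
      (if (fun i => (e p) (Fin.castAdd k i)) = (fun i => (e p) (Fin.natAdd k i))
        then (((graphPow G k).adjMatrix ℝ) ^ m) (fun i => (e p) (Fin.castAdd k i)) (fun i => (e p) (Fin.natAdd k i))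
        else 0)
      = if p.1 = p.2 then (((graphPow G k).adjMatrix ℝ) ^ m) p.1 p.2 else 0 := by
    intro p
    have h1 : (fun i => (e p) (Fin.castAdd k i)) = p.1 := by
      funext i; exact Fin.append_left p.1 p.2 i
    have h2 : (fun i => (e p) (Fin.natAdd k i)) = p.2 := by
      funext i; exact Fin.append_right p.1 p.2 i
    rw [h1, h2]
  simp_rw [hp]
  rw [Matrix.trace, Fintype.sum_prod_type]
  refine Finset.sum_congr rfl fun x _ => ?_
  simp [Matrix.diag, eq_comm]

open Polynomial in
lemma aux_charpoly_conj {n R : Type*} [Fintype n] [DecidableEq n] [CommRing R]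
    (U V A : Matrix n n R) (h1 : U * V = 1) :
    (U * A * V).charpoly = A.charpoly := by
  let f : Matrix n n R →+* Matrix n n R[X] := (Polynomial.C : R →+* R[X]).mapMatrix
  have key : Matrix.charmatrix (U * A * V) = f U * Matrix.charmatrix A * f V := by
    rw [Matrix.charmatrix, Matrix.charmatrix, mul_sub, sub_mul]
    congr 1
    · have hc : Matrix.scalar n (X : R[X]) * f V = f V * Matrix.scalar n (X : R[X]) :=
        (Matrix.scalar_commute (X : R[X]) (fun r' => Commute.all _ _) (f V))
      rw [Matrix.mul_assoc, hc, ← Matrix.mul_assoc, ← map_mul, h1, map_one, Matrix.one_mul]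
    · rw [← map_mul, ← map_mul]
  unfold Matrix.charpoly
  rw [key, Matrix.det_mul, Matrix.det_mul]
  have : (f U).det * (f V).det = 1 := by
    rw [← Matrix.det_mul, ← map_mul, h1, map_one, Matrix.det_one]
  calc (f U).det * (Matrix.charmatrix A).det * (f V).det
      = (Matrix.charmatrix A).det * ((f U).det * (f V).det) := by ring
    _ = (Matrix.charmatrix A).det := by rw [this, mul_one]

lemma aux_conj_pow {n R : Type*} [Fintype n] [DecidableEq n] [CommRing R]
    (U V D : Matrix n n R) (h1 : U * V = 1) (h2 : V * U = 1) (m : ℕ) :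
    (U * D * V) ^ m = U * D ^ m * V := by
  induction m with
  | zero => rw [pow_zero, pow_zero, Matrix.mul_one, h1]
  | succ m ih =>
    rw [pow_succ, ih, pow_succ]
    calc U * D ^ m * V * (U * D * V) = U * D ^ m * (V * U) * (D * V) := by
          simp only [Matrix.mul_assoc]
      _ = U * (D ^ m * D) * V := by
          rw [h2, Matrix.mul_one]
          simp only [Matrix.mul_assoc]

open Polynomial in
lemma aux_charpoly_diagonal {n R : Type*} [Fintype n] [DecidableEq n] [CommRing R] (d : n → R) :
    (Matrix.diagonal d).charpoly = ∏ i, (X - C (d i)) := by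
  unfold Matrix.charpoly
  have : Matrix.charmatrix (Matrix.diagonal d) = Matrix.diagonal (fun i => X - C (d i)) := by
    ext i j
    by_cases h : i = j
    · subst h; rw [Matrix.charmatrix_apply_eq, Matrix.diagonal_apply_eq, Matrix.diagonal_apply_eq]
    · rw [Matrix.charmatrix_apply_ne _ _ _ h, Matrix.diagonal_apply_ne _ h,
        Matrix.diagonal_apply_ne _ h, map_zero, neg_zero]
  rw [this, Matrix.det_diagonal]

open Polynomial in
lemma aux_newton {σ : Type*} [Fintype σ] [DecidableEq σ] (γ : σ → ℝ) (j : ℕ) :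
    (j : ℝ) * (Finset.univ.val.map γ).esymm j
      = (-1) ^ (j + 1) * ∑ a ∈ (Finset.HasAntidiagonal.antidiagonal j).filter (fun a => a.1 < j),
          (-1) ^ a.1 * (Finset.univ.val.map γ).esymm a.1 * (∑ i, γ i ^ a.2) := by
  have hh := congrArg (MvPolynomial.aeval γ) (MvPolynomial.mul_esymm_eq_sum σ ℝ j)
  simpa [map_mul, map_sum, map_pow, map_neg, map_one, map_natCast,
    MvPolynomial.aeval_esymm_eq_multiset_esymm, MvPolynomial.psum] using hh

lemma aux_esymm_eq {n n' : Type*} [Fintype n] [Fintype n'] [DecidableEq n] [DecidableEq n']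
    (α : n → ℝ) (β : n' → ℝ)
    (hcard : Fintype.card n = Fintype.card n')
    (hpow : ∀ m : ℕ, 0 < m → ∑ i, α i ^ m = ∑ i, β i ^ m) :
    ∀ j, (Finset.univ.val.map α).esymm j = (Finset.univ.val.map β).esymm j := by
  have hpow' : ∀ m : ℕ, (∑ i, α i ^ m) = ∑ i, β i ^ m := by
    intro m
    rcases Nat.eq_zero_or_pos m with hm | hm
    · subst hm
      simp [Finset.card_univ, hcard]
    · exact hpow m hm
  intro j
  induction j using Nat.strong_induction_on with
  | _ j ih =>
    rcases Nat.eq_zero_or_pos j with hj | hj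
    · subst hj
      simp [Multiset.esymm]
    · have h1 := aux_newton α j
      have h2 := aux_newton β j
      have hrhs : ∑ a ∈ (Finset.HasAntidiagonal.antidiagonal j).filter (fun a => a.1 < j),
            (-1:ℝ) ^ a.1 * (Finset.univ.val.map α).esymm a.1 * (∑ i, α i ^ a.2)
          = ∑ a ∈ (Finset.HasAntidiagonal.antidiagonal j).filter (fun a => a.1 < j),
            (-1:ℝ) ^ a.1 * (Finset.univ.val.map β).esymm a.1 * (∑ i, β i ^ a.2) := by
        refine Finset.sum_congr rfl fun a ha => ?_
        have halt : a.1 < j := (Finset.mem_filter.mp ha).2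
        rw [ih a.1 halt, hpow' a.2]
      have : (j : ℝ) * (Finset.univ.val.map α).esymm j
          = (j : ℝ) * (Finset.univ.val.map β).esymm j := by
        rw [h1, h2, hrhs]
      exact mul_left_cancel₀ (by exact_mod_cast hj.ne') this

open Polynomial in
lemma aux_charpoly_eq_of_trace_pow {n n' : Type*} [Fintype n] [Fintype n'] [DecidableEq n]
    [DecidableEq n'] (A : Matrix n n ℝ) (B : Matrix n' n' ℝ)
    (hA : A.IsHermitian) (hB : B.IsHermitian)
    (hcard : Fintype.card n = Fintype.card n')
    (ht : ∀ m : ℕ, (A ^ m).trace = (B ^ m).trace) :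
    A.charpoly = B.charpoly := by
  classical
  set α := hA.eigenvalues with hα
  set β := hB.eigenvalues with hβ
  set U : Matrix n n ℝ := (Matrix.IsHermitian.eigenvectorUnitary hA : Matrix n n ℝ) with hU
  set W : Matrix n' n' ℝ := (Matrix.IsHermitian.eigenvectorUnitary hB : Matrix n' n' ℝ) with hW
  have hU1 : U * star U = 1 := Matrix.mem_unitaryGroup_iff.mp (Matrix.IsHermitian.eigenvectorUnitary hA).2
  have hU2 : star U * U = 1 := Matrix.mem_unitaryGroup_iff'.mp (Matrix.IsHermitian.eigenvectorUnitary hA).2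
  have hW1 : W * star W = 1 := Matrix.mem_unitaryGroup_iff.mp (Matrix.IsHermitian.eigenvectorUnitary hB).2
  have hW2 : star W * W = 1 := Matrix.mem_unitaryGroup_iff'.mp (Matrix.IsHermitian.eigenvectorUnitary hB).2
  have hAspec : A = U * Matrix.diagonal α * star U := by
    have := hA.spectral_theorem
    simpa using this
  have hBspec : B = W * Matrix.diagonal β * star W := by
    have := hB.spectral_theorem
    simpa using this
  -- power sums
  have hpow : ∀ m : ℕ, 0 < m → ∑ i, α i ^ m = ∑ i, β i ^ m := by
    intro m _
    have hta : (A ^ m).trace = ∑ i, α i ^ m := by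
      rw [hAspec, aux_conj_pow _ _ _ hU1 hU2, Matrix.trace_mul_cycle,
        hU2, Matrix.one_mul, Matrix.diagonal_pow, Matrix.trace_diagonal]
      simp
    have htb : (B ^ m).trace = ∑ i, β i ^ m := by
      rw [hBspec, aux_conj_pow _ _ _ hW1 hW2, Matrix.trace_mul_cycle,
        hW2, Matrix.one_mul, Matrix.diagonal_pow, Matrix.trace_diagonal]
      simp
    rw [← hta, ← htb, ht m]
  have hes := aux_esymm_eq α β hcard hpow
  -- characteristic polynomials via eigenvalues
  have hAc : A.charpoly = ((Finset.univ.val.map α).map (fun t => X - C t)).prod := by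
    rw [hAspec, aux_charpoly_conj _ _ _ hU1, aux_charpoly_diagonal]
    rw [Finset.prod, Multiset.map_map]
    rfl
  have hBc : B.charpoly = ((Finset.univ.val.map β).map (fun t => X - C t)).prod := by
    rw [hBspec, aux_charpoly_conj _ _ _ hW1, aux_charpoly_diagonal]
    rw [Finset.prod, Multiset.map_map]
    rfl
  rw [hAc, hBc, Multiset.prod_X_sub_X_eq_sum_esymm, Multiset.prod_X_sub_X_eq_sum_esymm]
  have hcm : Multiset.card (Finset.univ.val.map α) = Multiset.card (Finset.univ.val.map β) := by
    simp [hcard]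
  rw [hcm]
  refine Finset.sum_congr rfl fun j _ => ?_
  rw [hes j]

/-- STATEMENT 14 proof -/
theorem graphPow_cospectral_of_WL2k_multisets_eq
    {V V' : Type*} [Fintype V] [Fintype V'] [DecidableEq V] [DecidableEq V']
    (G : SimpleGraph V) (H : SimpleGraph V') (k : ℕ)
    (hcard : Fintype.card V = Fintype.card V')
    (h : ∀ r : ℕ,
      (Finset.univ.val.map fun x : Fin (k + k) → V => WL G (k + k) r x) =
      (Finset.univ.val.map fun x : Fin (k + k) → V' => WL H (k + k) r x)) :
    ((graphPow G k).adjMatrix ℝ).charpoly = ((graphPow H k).adjMatrix ℝ).charpoly := by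
  classical
  have hA : ((graphPow G k).adjMatrix ℝ).IsHermitian := by
    refine Matrix.IsHermitian.ext fun i j => ?_
    rw [star_trivial]
    exact congrFun (congrFun (SimpleGraph.isSymm_adjMatrix (graphPow G k)) i) j
  have hB : ((graphPow H k).adjMatrix ℝ).IsHermitian := by
    refine Matrix.IsHermitian.ext fun i j => ?_
    rw [star_trivial]
    exact congrFun (congrFun (SimpleGraph.isSymm_adjMatrix (graphPow H k)) i) j
  have hc : Fintype.card (Fin k → V) = Fintype.card (Fin k → V') := by
    rw [Fintype.card_fun, Fintype.card_fun, hcard]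
  have ht : ∀ m : ℕ, (((graphPow G k).adjMatrix ℝ ^ m)).trace
      = (((graphPow H k).adjMatrix ℝ ^ m)).trace := by
    intro m
    rw [trace_pow_eq_gval_sum G k m, trace_pow_eq_gval_sum H k m]
    have h1 : (Finset.univ.val.map (fun z : Fin (k+k) → V => gval k m (WL G (k+k) m z)))
        = (Finset.univ.val.map (fun z : Fin (k+k) → V => WL G (k+k) m z)).map (gval k m) := by
      rw [Multiset.map_map]; rfl
    have h2 : (Finset.univ.val.map (fun z : Fin (k+k) → V' => gval k m (WL H (k+k) m z)))
        = (Finset.univ.val.map (fun z : Fin (k+k) → V' => WL H (k+k) m z)).map (gval k m) := by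
      rw [Multiset.map_map]; rfl
    rw [h1, h2, h m]
  exact aux_charpoly_eq_of_trace_pow _ _ hA hB hc ht
end
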